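/- Let σ > 0 and ω ∈ (0,π) with σ² ∈ ℚ and σ·cos ω ∈ ℚ. Then for every nonzero c = α₁e₁ + α₂σa in Γ_o = ℤe₁ ⊕ ℤ(σa), where a = (cos ω)e₁ + (sin ω)e₂, the reflection φ_c has rational matrix with respect to the basis {e₁, σa}, hence is a coincidence isometry of Γ_o. -/

import Mathlib

noncomputable section
open scoped InnerProductSpace

abbrev E2 := EuclideanSpace ℝ (Fin 2)

def e1 : E2 := EuclideanSpace.single 0 1
def e2 : E2 := EuclideanSpace.single 1 1

/-- The ℤ-span of a set of vectors, as an additive subgroup of ℝ². -/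
def latt (s : Set E2) : AddSubgroup E2 := (Submodule.span ℤ s).toAddSubgroup

/-- Image lattice of `Γ` under a linear map. -/
def imageLat (f : E2 →ₗ[ℝ] E2) (Γ : AddSubgroup E2) : AddSubgroup E2 :=
  Γ.map f.toAddMonoidHom

/-- `f` is a coincidence transformation of `Γ`: `Γ ∩ fΓ` has finite index in `Γ`. -/
def CI (Γ : AddSubgroup E2) (f : E2 →ₗ[ℝ] E2) : Prop :=
  (Γ ⊓ imageLat f Γ).relIndex Γ ≠ 0

/-- Counterclockwise rotation of ℝ² by angle `θ`. -/
def rot (θ : ℝ) : E2 →ₗ[ℝ] E2 :=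
  Matrix.toEuclideanLin !![Real.cos θ, -Real.sin θ; Real.sin θ, Real.cos θ]

/-- Reflection in the line through the origin orthogonal to `c`:
`x ↦ x - 2 (⟪x,c⟫ / ‖c‖²) • c`. -/
def reflc (c : E2) : E2 →ₗ[ℝ] E2 :=
  LinearMap.id - (2 / ‖c‖ ^ 2) • ((innerSL ℝ c : E2 →ₗ[ℝ] ℝ).smulRight c)

lemma reflc_apply (c x : E2) :
    reflc c x = x - (2 / ‖c‖ ^ 2 * (inner ℝ c x : ℝ)) • c := by
  simp [reflc, smul_smul]

lemma reflc_invol (c : E2) (hc : c ≠ 0) (x : E2) : reflc c (reflc c x) = x := by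
  have hN : ‖c‖ ^ 2 ≠ 0 := pow_ne_zero _ (norm_ne_zero_iff.mpr hc)
  rw [reflc_apply, reflc_apply, inner_sub_right, real_inner_smul_right,
    real_inner_self_eq_norm_sq]
  rw [sub_sub, ← add_smul]
  have : 2 / ‖c‖ ^ 2 * (inner ℝ c x : ℝ) +
      2 / ‖c‖ ^ 2 * ((inner ℝ c x : ℝ) - 2 / ‖c‖ ^ 2 * (inner ℝ c x : ℝ) * ‖c‖ ^ 2) = 0 := by
    field_simp
    ring
  rw [this, zero_smul, sub_zero]

lemma exists_int_of_den_dvd (q : ℚ) (k : ℕ) (h : q.den ∣ k) :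
    ∃ n : ℤ, (k : ℚ) * q = n := by
  obtain ⟨m, rfl⟩ := h
  refine ⟨q.num * m, ?_⟩
  have hden : ((q.den : ℚ)) ≠ 0 := by exact_mod_cast q.den_nz
  have hq : q * (q.den : ℚ) = q.num := by
    nth_rewrite 1 [← Rat.num_div_den q]
    exact div_mul_cancel₀ _ hden
  push_cast
  rw [show ((q.den : ℚ)) * m * q = (q * q.den) * m by ring, hq]

theorem stmt_15 (σ ω : ℝ) (hσ : 0 < σ) (hω : ω ∈ Set.Ioo 0 Real.pi)
    (hσ2 : ∃ r : ℚ, σ ^ 2 = (r : ℝ)) (hσω : ∃ r : ℚ, σ * Real.cos ω = (r : ℝ))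
    (a : E2) (ha : a = Real.cos ω • e1 + Real.sin ω • e2)
    (α₁ α₂ : ℤ) (c : E2) (hc : c = α₁ • e1 + α₂ • (σ • a)) (hc0 : c ≠ 0) :
    (∃ q₁₁ q₂₁ q₁₂ q₂₂ : ℚ,
      reflc c e1 = (q₁₁ : ℝ) • e1 + (q₂₁ : ℝ) • (σ • a) ∧
      reflc c (σ • a) = (q₁₂ : ℝ) • e1 + (q₂₂ : ℝ) • (σ • a)) ∧
    CI (latt {e1, σ • a}) (reflc c) := by
  obtain ⟨r2, hr2⟩ := hσ2
  obtain ⟨rc, hrc⟩ := hσω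
  -- basic inner products
  have h11 : (inner ℝ e1 e1 : ℝ) = 1 := by
    simp [e1, EuclideanSpace.inner_single_left, EuclideanSpace.single_apply]
  have h12 : (inner ℝ e1 e2 : ℝ) = 0 := by
    simp [e1, e2, EuclideanSpace.inner_single_left, EuclideanSpace.single_apply]
  have h21 : (inner ℝ e2 e1 : ℝ) = 0 := by
    simp [e1, e2, EuclideanSpace.inner_single_left, EuclideanSpace.single_apply]
  have h22 : (inner ℝ e2 e2 : ℝ) = 1 := by
    simp [e2, EuclideanSpace.inner_single_left, EuclideanSpace.single_apply]
  have hae1 : (inner ℝ a e1 : ℝ) = Real.cos ω := by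
    rw [ha, inner_add_left, real_inner_smul_left, real_inner_smul_left, h11, h21]
    ring
  have he1a : (inner ℝ e1 a : ℝ) = Real.cos ω := by
    rw [real_inner_comm]; exact hae1
  have haa : (inner ℝ a a : ℝ) = 1 := by
    simp only [ha, inner_add_left, inner_add_right, real_inner_smul_left,
      real_inner_smul_right, h11, h12, h21, h22]
    linear_combination Real.sin_sq_add_cos_sq ω
  have hc2 : c = (α₁ : ℝ) • e1 + (α₂ : ℝ) • (σ • a) := by
    rw [hc, Int.cast_smul_eq_zsmul, Int.cast_smul_eq_zsmul]
  have hI1 : (inner ℝ c e1 : ℝ) = α₁ + α₂ * (σ * Real.cos ω) := by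
    rw [hc2]
    simp only [inner_add_left, real_inner_smul_left, real_inner_smul_right, h11, hae1]
    ring
  have hI2 : (inner ℝ c (σ • a) : ℝ) = α₁ * (σ * Real.cos ω) + α₂ * σ ^ 2 := by
    rw [hc2]
    simp only [inner_add_left, real_inner_smul_left, real_inner_smul_right, he1a, haa]
    ring
  have hNr : ‖c‖ ^ 2 = (α₁:ℝ) ^ 2 + 2 * α₁ * α₂ * (σ * Real.cos ω) + α₂ ^ 2 * σ ^ 2 := by
    rw [← real_inner_self_eq_norm_sq]
    nth_rewrite 2 [hc2]
    rw [inner_add_right, real_inner_smul_right, real_inner_smul_right, hI1, hI2]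
    ring
  set N : ℚ := (α₁:ℚ) ^ 2 + 2 * α₁ * α₂ * rc + α₂ ^ 2 * r2 with hNdef
  have hNc : (N : ℝ) = ‖c‖ ^ 2 := by
    rw [hNr, hrc, hr2, hNdef]; push_cast; ring
  have hN0 : N ≠ 0 := by
    intro h
    have : ‖c‖ ^ 2 ≠ 0 := pow_ne_zero _ (norm_ne_zero_iff.mpr hc0)
    rw [← hNc, h] at this; simp at this
  set I1 : ℚ := (α₁:ℚ) + α₂ * rc with hI1def
  set I2 : ℚ := (α₁:ℚ) * rc + α₂ * r2 with hI2def
  have hI1c : (inner ℝ c e1 : ℝ) = (I1 : ℝ) := by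
    rw [hI1, hrc, hI1def]; push_cast; ring
  have hI2c : (inner ℝ c (σ • a) : ℝ) = (I2 : ℝ) := by
    rw [hI2, hrc, hr2, hI2def]; push_cast; ring
  set q₁₁ : ℚ := 1 - 2 * I1 / N * α₁ with hq11
  set q₂₁ : ℚ := -(2 * I1 / N * α₂) with hq21
  set q₁₂ : ℚ := -(2 * I2 / N * α₁) with hq12
  set q₂₂ : ℚ := 1 - 2 * I2 / N * α₂ with hq22
  have hNc0 : (N : ℝ) ≠ 0 := by exact_mod_cast hN0
  have hfe1 : reflc c e1 = (q₁₁ : ℝ) • e1 + (q₂₁ : ℝ) • (σ • a) := by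
    rw [reflc_apply, hI1c, hNc.symm]
    nth_rewrite 1 [hc2]
    rw [hq11, hq21]
    push_cast
    match_scalars <;> (field_simp [hN0, hNc0]; try ring)
  have hfv : reflc c (σ • a) = (q₁₂ : ℝ) • e1 + (q₂₂ : ℝ) • (σ • a) := by
    rw [reflc_apply, hI2c, hNc.symm]
    nth_rewrite 1 [hc2]
    rw [hq12, hq22]
    push_cast
    match_scalars <;> (field_simp [hN0, hNc0]; try ring)
  refine ⟨⟨q₁₁, q₂₁, q₁₂, q₂₂, hfe1, hfv⟩, ?_⟩
  -- CI part
  set Γ' : Submodule ℤ E2 := Submodule.span ℤ {e1, σ • a} with hG'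
  set D : ℕ := q₁₁.den * q₂₁.den * q₁₂.den * q₂₂.den with hD
  have hDpos : 0 < D := by
    apply Nat.pos_of_ne_zero
    simp [hD, q₁₁.den_nz, q₂₁.den_nz, q₁₂.den_nz, q₂₂.den_nz]
  obtain ⟨n₁₁, hn11⟩ := exists_int_of_den_dvd q₁₁ D ⟨q₂₁.den * q₁₂.den * q₂₂.den, by rw [hD]; ring⟩
  obtain ⟨n₂₁, hn21⟩ := exists_int_of_den_dvd q₂₁ D ⟨q₁₁.den * q₁₂.den * q₂₂.den, by rw [hD]; ring⟩
  obtain ⟨n₁₂, hn12⟩ := exists_int_of_den_dvd q₁₂ D ⟨q₁₁.den * q₂₁.den * q₂₂.den, by rw [hD]; ring⟩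
  obtain ⟨n₂₂, hn22⟩ := exists_int_of_den_dvd q₂₂ D ⟨q₁₁.den * q₂₁.den * q₁₂.den, by rw [hD]; ring⟩
  have hmem1 : e1 ∈ Γ' := Submodule.subset_span (by simp)
  have hmem2 : σ • a ∈ Γ' := Submodule.subset_span (by simp)
  have cast1 : ∀ (q : ℚ) (n : ℤ), (D : ℚ) * q = n → ((D:ℤ):ℝ) * (q:ℝ) = (n:ℝ) := by
    intro q n h
    have := congrArg (fun r : ℚ => (r : ℝ)) h
    push_cast at this ⊢
    exact this
  have hDe1 : reflc c ((D:ℤ) • e1) ∈ Γ' := by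
    have heq : reflc c ((D:ℤ) • e1) = ((n₁₁:ℤ):ℝ) • e1 + ((n₂₁:ℤ):ℝ) • (σ • a) := by
      rw [map_zsmul, hfe1, ← Int.cast_smul_eq_zsmul ℝ, smul_add, smul_smul, smul_smul,
        cast1 _ _ hn11, cast1 _ _ hn21]
    rw [heq, Int.cast_smul_eq_zsmul ℝ, Int.cast_smul_eq_zsmul ℝ]
    exact Submodule.add_mem _ (Submodule.smul_mem _ _ hmem1) (Submodule.smul_mem _ _ hmem2)
  have hDv : reflc c ((D:ℤ) • (σ • a)) ∈ Γ' := by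
    have heq : reflc c ((D:ℤ) • (σ • a)) = ((n₁₂:ℤ):ℝ) • e1 + ((n₂₂:ℤ):ℝ) • (σ • a) := by
      rw [map_zsmul, hfv, ← Int.cast_smul_eq_zsmul ℝ, smul_add, smul_smul, smul_smul,
        cast1 _ _ hn12, cast1 _ _ hn22]
    rw [heq, Int.cast_smul_eq_zsmul ℝ, Int.cast_smul_eq_zsmul ℝ]
    exact Submodule.add_mem _ (Submodule.smul_mem _ _ hmem1) (Submodule.smul_mem _ _ hmem2)
  have hTmem : ∀ x ∈ Γ', reflc c ((D:ℤ) • x) ∈ Γ' := by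
    intro x hx
    induction hx using Submodule.span_induction with
    | mem v hv =>
      rcases hv with rfl | hv
      · exact hDe1
      · rw [Set.mem_singleton_iff] at hv; rw [hv]; exact hDv
    | zero => simp
    | add x y _ _ hx hy => rw [smul_add, map_add]; exact Submodule.add_mem _ hx hy
    | smul z x _ hx =>
      rw [smul_comm, map_zsmul]
      exact Submodule.smul_mem _ _ hx
  set Γ : AddSubgroup E2 := latt {e1, σ • a} with hGamma
  have hGG : ∀ x : E2, x ∈ Γ ↔ x ∈ Γ' := fun x => Iff.rfl
  set H : AddSubgroup E2 := Γ ⊓ imageLat (reflc c) Γ with hH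
  -- torsion: D kills the quotient
  have htor : ∀ x ∈ Γ, (D : ℤ) • x ∈ H := by
    intro x hx
    constructor
    · exact AddSubgroup.zsmul_mem Γ hx _
    · refine ⟨reflc c ((D:ℤ) • x), hTmem x ((hGG x).mp hx), ?_⟩
      show reflc c (reflc c ((D:ℤ) • x)) = (D:ℤ) • x
      exact reflc_invol c hc0 _
  -- finiteness of the quotient
  haveI : Module.Finite ℤ Γ' := by
    rw [hG']
    exact Module.Finite.span_of_finite ℤ (Set.toFinite _)
  haveI : AddGroup.FG Γ' := Module.Finite.iff_addGroup_fg.mp ‹_›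
  haveI : AddGroup.FG Γ := ‹AddGroup.FG Γ'›
  haveI : Finite (Γ ⧸ H.addSubgroupOf Γ) := by
    apply AddCommGroup.finite_of_fg_torsion
    intro g
    induction g using QuotientAddGroup.induction_on with
    | H x =>
      rw [isOfFinAddOrder_iff_nsmul_eq_zero]
      refine ⟨D, hDpos, ?_⟩
      rw [← QuotientAddGroup.mk_nsmul, QuotientAddGroup.eq_zero_iff]
      show ((D • x : Γ) : E2) ∈ H
      have : ((D • x : Γ) : E2) = (D : ℤ) • (x : E2) := by
        push_cast [natCast_zsmul]; rfl
      rw [this]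
      exact htor x x.2
  show H.relIndex Γ ≠ 0
  exact AddSubgroup.index_ne_zero_of_finite
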